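/- arXiv:1809.02439 — 4 statements merged into one kernel-verified Lean document; each statement's English description precedes it below -/
import Mathlib

section
/- For fixed b ∈ ℝⁿ, the unique minimizer in x of the surrogate functional f(x,b) = f(x) + s(x,b) is given in closed form by S_{λτ/(μτ+1)}[ (b + τ Aᵀ(y − Ab)) / (1 + μτ) ], where S denotes componentwise soft thresholding. -/
/-- Scalar soft thresholding operator. -/
noncomputable def softThresh (β z : ℝ) : ℝ :=
  if β < z then z - β else if z < -β then z + β else 0

/-- Componentwise soft thresholding on ℝⁿ. -/
noncomputable def softThreshVec {n : ℕ} (β : ℝ) (x : EuclideanSpace ℝ (Fin n)) :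
    EuclideanSpace ℝ (Fin n) :=
  WithLp.toLp 2 (fun i => softThresh β (x i))

/-- The ℓ¹ norm on ℝⁿ. -/
noncomputable def l1norm {n : ℕ} (x : EuclideanSpace ℝ (Fin n)) : ℝ := ∑ i, |x i|

/-- The Elastic-net functional f(x) = (1/2)‖y − Ax‖² + λ‖x‖₁ + (μ/2)‖x‖². -/
noncomputable def enet {n m : ℕ} (A : EuclideanSpace ℝ (Fin n) →L[ℝ] EuclideanSpace ℝ (Fin m))
    (y : EuclideanSpace ℝ (Fin m)) (lam μ : ℝ) (x : EuclideanSpace ℝ (Fin n)) : ℝ :=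
  (1/2) * ‖y - A x‖^2 + lam * l1norm x + (μ/2) * ‖x‖^2

/-- The IST map Γ(x) = S_{λτ/(μτ+1)}[(x + τAᵀ(y − Ax))/(1 + μτ)]. -/
noncomputable def istMap {n m : ℕ} (A : EuclideanSpace ℝ (Fin n) →L[ℝ] EuclideanSpace ℝ (Fin m))
    (y : EuclideanSpace ℝ (Fin m)) (lam μ τ : ℝ) (x : EuclideanSpace ℝ (Fin n)) :
    EuclideanSpace ℝ (Fin n) :=
  softThreshVec (lam * τ / (μ * τ + 1))
    ((1 + μ * τ)⁻¹ • (x + τ • (ContinuousLinearMap.adjoint A) (y - A x)))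

/-- The surrogate correction term s(x,b). -/
noncomputable def surr {n m : ℕ} (A : EuclideanSpace ℝ (Fin n) →L[ℝ] EuclideanSpace ℝ (Fin m))
    (τ : ℝ) (x b : EuclideanSpace ℝ (Fin n)) : ℝ :=
  (1 / (2 * τ)) * ‖x - b‖^2 - (1/2) * ‖A x - A b‖^2

open RealInnerProductSpace Finset in
/-- Squared Euclidean norm as a sum of squares. -/
lemma aux_esq {n : ℕ} (v : EuclideanSpace ℝ (Fin n)) : ‖v‖^2 = ∑ i, (v i)^2 := by
  rw [EuclideanSpace.norm_eq, Real.sq_sqrt (by positivity)]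
  simp [Real.norm_eq_abs, sq_abs]

/-- Strong-convexity-style key inequality for the scalar problem
`t ↦ a t² - d t + lam |t|`, whose minimizer is soft thresholding. -/
lemma aux_scalar_key (a lam d t : ℝ) (ha : 0 < a) (hlam : 0 < lam) :
    a * (softThresh (lam/(2*a)) (d/(2*a)))^2 - d * (softThresh (lam/(2*a)) (d/(2*a)))
      + lam * |softThresh (lam/(2*a)) (d/(2*a))|
      + a * (t - softThresh (lam/(2*a)) (d/(2*a)))^2
    ≤ a * t^2 - d * t + lam * |t| := by
  have h2a : (0:ℝ) < 2*a := by linarith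
  have ht1 : t ≤ |t| := le_abs_self t
  have ht2 : -t ≤ |t| := neg_le_abs t
  set s := softThresh (lam/(2*a)) (d/(2*a)) with hs
  rw [softThresh] at hs
  split_ifs at hs with h1 h2
  · have hspos : 0 < s := by rw [hs]; rw [sub_pos]; exact h1
    have habs : |s| = s := abs_of_pos hspos
    have hs2a : 2*a*s = d - lam := by rw [hs]; field_simp
    have e1 : 2*a*s^2 = (d-lam)*s := by rw [sq]; linear_combination s * hs2a
    have e2 : 2*a*s*t = (d-lam)*t := by linear_combination t * hs2a
    rw [habs]
    nlinarith [e1, e2, mul_le_mul_of_nonneg_left ht1 hlam.le]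
  · have hspos : s < 0 := by
      rw [hs]
      have : d/(2*a) < -(lam/(2*a)) := h2
      have hl : 0 < lam/(2*a) := by positivity
      linarith
    have habs : |s| = -s := abs_of_neg hspos
    have hs2a : 2*a*s = d + lam := by rw [hs]; field_simp
    have e1 : 2*a*s^2 = (d+lam)*s := by rw [sq]; linear_combination s * hs2a
    have e2 : 2*a*s*t = (d+lam)*t := by linear_combination t * hs2a
    rw [habs]
    nlinarith [e1, e2, mul_le_mul_of_nonneg_left ht2 hlam.le]
  · have hd1 : d ≤ lam := by
      rw [not_lt] at h1; exact (div_le_div_iff_of_pos_right h2a).mp h1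
    have hd2 : -lam ≤ d := by
      rw [not_lt] at h2
      have h' : (-lam)/(2*a) ≤ d/(2*a) := by rw [neg_div]; exact h2
      exact (div_le_div_iff_of_pos_right h2a).mp h'
    have hdt : d * t ≤ lam * |t| := by
      rcases le_or_gt 0 t with h | h
      · have : |t| = t := abs_of_nonneg h; nlinarith
      · have : |t| = -t := abs_of_neg h; nlinarith
    rw [hs]
    simp only [abs_zero]
    nlinarith

open RealInnerProductSpace Finset in
/-- The surrogate functional decouples into a constant plus a sum of scalar functions. -/
lemma aux_surrogate_decouple {n m : ℕ}
    (A : EuclideanSpace ℝ (Fin n) →L[ℝ] EuclideanSpace ℝ (Fin m))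
    (y : EuclideanSpace ℝ (Fin m)) (lam μ τ : ℝ)
    (hτ : 0 < τ)
    (b x : EuclideanSpace ℝ (Fin n)) :
    enet A y lam μ x + surr A τ x b =
      ((1/2)*‖y‖^2 - (1/2)*‖A b‖^2 + (1/(2*τ))*‖b‖^2)
      + ∑ i, ((μ/2 + 1/(2*τ))*(x i)^2
          - (((b + τ • (ContinuousLinearMap.adjoint A) (y - A b)) i)/τ)*(x i)
          + lam*|x i|) := by
  set c : EuclideanSpace ℝ (Fin n) := b + τ • (ContinuousLinearMap.adjoint A) (y - A b) with hc
  have hτ' : τ ≠ 0 := hτ.ne'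
  set D : ℝ := ⟪x, (ContinuousLinearMap.adjoint A) (y - A b)⟫ with hD
  have hτi : τ⁻¹ * τ = 1 := inv_mul_cancel₀ hτ'
  have hinner : (1/τ) * ⟪x, c⟫ = (1/τ) * ⟪x, b⟫ + D := by
    rw [hc, inner_add_right, real_inner_smul_right, ← hD]
    linear_combination D * hτi
  have hadj : ⟪A x, y⟫ - ⟪A x, A b⟫ = D := by
    rw [hD, ContinuousLinearMap.adjoint_inner_right, inner_sub_right]
  have e1 : ‖y - A x‖^2 = ‖y‖^2 - 2*⟪y, A x⟫ + ‖A x‖^2 := norm_sub_sq_real y (A x)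
  have e2 : ‖A x - A b‖^2 = ‖A x‖^2 - 2*⟪A x, A b⟫ + ‖A b‖^2 := norm_sub_sq_real _ _
  have e3 : ‖x - b‖^2 = ‖x‖^2 - 2*⟪x, b⟫ + ‖b‖^2 := norm_sub_sq_real x b
  have hcomm : ⟪y, A x⟫ = ⟪A x, y⟫ := real_inner_comm _ _
  have hsum1 : ∑ i, ((c i)/τ*(x i)) = (1/τ) * ⟪x, c⟫ := by
    simp only [PiLp.inner_apply, RCLike.inner_apply, conj_trivial, Finset.mul_sum]
    exact Finset.sum_congr rfl (fun i _ => by ring)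
  have hsum : ∑ i, ((μ/2 + 1/(2*τ))*(x i)^2 - ((c i)/τ)*(x i) + lam*|x i|)
      = (μ/2 + 1/(2*τ))*‖x‖^2 - (1/τ)*⟪x, c⟫ + lam * l1norm x := by
    rw [Finset.sum_add_distrib, Finset.sum_sub_distrib, hsum1, aux_esq, l1norm,
      ← Finset.mul_sum, ← Finset.mul_sum]
  rw [hsum]
  unfold enet surr
  rw [e1, e2, e3, hcomm]
  linear_combination hinner - hadj

theorem surrogate_unique_minimizer {n m : ℕ}
    (A : EuclideanSpace ℝ (Fin n) →L[ℝ] EuclideanSpace ℝ (Fin m))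
    (y : EuclideanSpace ℝ (Fin m)) (lam μ τ : ℝ)
    (hlam : 0 < lam) (hμ : 0 < μ) (hτ : 0 < τ) (hA : τ * ‖A‖^2 ≤ 1)
    (b : EuclideanSpace ℝ (Fin n)) :
    let F : EuclideanSpace ℝ (Fin n) → ℝ := fun x => enet A y lam μ x + surr A τ x b
    let w := softThreshVec (lam * τ / (μ * τ + 1))
      ((1 + μ * τ)⁻¹ • (b + τ • (ContinuousLinearMap.adjoint A) (y - A b)))
    (∀ x, F w ≤ F x) ∧ (∀ x, (∀ x', F x ≤ F x') → x = w) := by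
  intro F w
  have hτ' : τ ≠ 0 := hτ.ne'
  set c : EuclideanSpace ℝ (Fin n) := b + τ • (ContinuousLinearMap.adjoint A) (y - A b) with hc
  set a : ℝ := μ/2 + 1/(2*τ) with haa
  have ha : 0 < a := by rw [haa]; positivity
  have hμτ : (0:ℝ) < μ*τ + 1 := by positivity
  -- the components of w are the scalar soft-thresholding minimizers
  have hw : ∀ i, w i = softThresh (lam/(2*a)) ((c i / τ)/(2*a)) := by
    intro i
    have hb : lam * τ / (μ * τ + 1) = lam/(2*a) := by
      rw [haa]; field_simp
    have hz : (1 + μ * τ)⁻¹ * (c i) = (c i / τ)/(2*a) := by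
      rw [haa]; field_simp; ring
    show softThresh (lam * τ / (μ * τ + 1)) (((1 + μ * τ)⁻¹ • c) i)
        = softThresh (lam/(2*a)) ((c i / τ)/(2*a))
    have : ((1 + μ * τ)⁻¹ • c) i = (1 + μ * τ)⁻¹ * (c i) := rfl
    rw [this, hb, hz]
  have hFid : ∀ x : EuclideanSpace ℝ (Fin n), F x =
      ((1/2)*‖y‖^2 - (1/2)*‖A b‖^2 + (1/(2*τ))*‖b‖^2)
      + ∑ i, (a*(x i)^2 - ((c i)/τ)*(x i) + lam*|x i|) :=
    fun x => aux_surrogate_decouple A y lam μ τ hτ b x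
  -- key inequality: F w + a‖x - w‖² ≤ F x
  have key : ∀ x : EuclideanSpace ℝ (Fin n),
      F w + a * ∑ i, (x i - w i)^2 ≤ F x := by
    intro x
    rw [hFid x, hFid w]
    have hterm : ∀ i ∈ Finset.univ,
        (a*(w i)^2 - ((c i)/τ)*(w i) + lam*|w i|) + a*(x i - w i)^2
          ≤ a*(x i)^2 - ((c i)/τ)*(x i) + lam*|x i| := by
      intro i _
      rw [hw i]
      exact aux_scalar_key a lam (c i / τ) (x i) ha hlam
    have hsum := Finset.sum_le_sum hterm
    rw [Finset.sum_add_distrib] at hsum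
    rw [Finset.mul_sum]
    linarith
  constructor
  · intro x
    have h := key x
    have hnn : 0 ≤ a * ∑ i, (x i - w i)^2 := by positivity
    linarith
  · intro x hx
    have h1 : F x ≤ F w := hx w
    have h2 := key x
    have h3 : a * ∑ i, (x i - w i)^2 ≤ 0 := by linarith
    have h4 : ∑ i, (x i - w i)^2 ≤ 0 := by
      by_contra h
      push_neg at h
      nlinarith
    have h5 : ∑ i, (x i - w i)^2 = 0 :=
      le_antisymm h4 (Finset.sum_nonneg fun i _ => sq_nonneg _)
    have h6 : ∀ i ∈ Finset.univ, (x i - w i)^2 = 0 :=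
      (Finset.sum_eq_zero_iff_of_nonneg fun i _ => sq_nonneg _).mp h5
    ext i
    have := h6 i (Finset.mem_univ i)
    have : x i - w i = 0 := by
      have := sq_eq_zero_iff.mp this
      exact this
    linarith [this]
end

section
/- The minimizer z of the Elastic-net functional f is a fixed point of the IST map Γ(x) = S_{λτ/(μτ+1)}[(x + τAᵀ(y − Ax))/(1 + μτ)], i.e., Γ(z) = z. -/
/-- Scalar subgradient-to-fixed-point lemma. -/
lemma scalar_key (lam μ τ zi g C : ℝ) (hlam : 0 < lam) (hμ : 0 < μ) (hτ : 0 < τ)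
    (hC : 0 < C)
    (h : ∀ t : ℝ, t * (g - μ * zi) ≤ lam * (|zi + t| - |zi|) + t ^ 2 * C / 2) :
    softThresh (lam * τ / (μ * τ + 1)) ((1 + μ * τ)⁻¹ * (zi + τ * g)) = zi := by
  have hd : (0:ℝ) < μ * τ + 1 := by positivity
  have hd' : (0:ℝ) < 1 + μ * τ := by positivity
  have hβ : 0 < lam * τ / (μ * τ + 1) := by positivity
  rcases lt_trichotomy zi 0 with hzi | hzi | hzi
  · -- zi < 0 : g = μ zi - lam
    have hg : g = μ * zi - lam := by
      have h1 : g - μ * zi ≤ -lam := by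
        by_contra hc
        push_neg at hc
        have hε0 : 0 < min (-zi) ((g - μ * zi + lam) / C) :=
          lt_min (by linarith) (div_pos (by linarith) hC)
        set ε := min (-zi) ((g - μ * zi + lam) / C) with hεdef
        have hε1 : ε ≤ -zi := min_le_left _ _
        have hε2 : ε * C ≤ g - μ * zi + lam := (le_div_iff₀ hC).mp (min_le_right _ _)
        have ht := h ε
        rw [abs_of_nonpos (by linarith), abs_of_neg hzi] at ht
        nlinarith [mul_le_mul_of_nonneg_left hε2 hε0.le, mul_pos hε0 (show (0:ℝ) < g - μ * zi + lam by linarith)]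
      have h2 : -lam ≤ g - μ * zi := by
        by_contra hc
        push_neg at hc
        set ε := (-(g - μ * zi) - lam) / C with hεdef
        have hε0 : 0 < ε := div_pos (by linarith) hC
        have hεC : ε * C = -(g - μ * zi) - lam := div_mul_cancel₀ _ hC.ne'
        have ht := h (-ε)
        rw [abs_of_neg (by linarith), abs_of_neg hzi] at ht
        nlinarith [mul_pos hε0 hε0, mul_pos (mul_pos hε0 hε0) hC]
      linarith
    have hw : (1 + μ * τ)⁻¹ * (zi + τ * g) = zi - lam * τ / (μ * τ + 1) := by
      rw [hg]; field_simp; ring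
    rw [hw]
    unfold softThresh
    rw [if_neg (by push_neg; linarith), if_pos (by linarith)]
    ring
  · -- zi = 0 : |g| ≤ lam
    subst hzi
    have hgle : g ≤ lam := by
      by_contra hc
      push_neg at hc
      set ε := (g - lam) / C with hεdef
      have hε0 : 0 < ε := div_pos (by linarith) hC
      have hεC : ε * C = g - lam := div_mul_cancel₀ _ hC.ne'
      have ht := h ε
      rw [zero_add, abs_of_pos hε0] at ht
      simp only [abs_zero, mul_zero, sub_zero] at ht
      nlinarith [mul_pos hε0 hε0, mul_pos (mul_pos hε0 hε0) hC]
    have hgge : -lam ≤ g := by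
      by_contra hc
      push_neg at hc
      set ε := (-g - lam) / C with hεdef
      have hε0 : 0 < ε := div_pos (by linarith) hC
      have hεC : ε * C = -g - lam := div_mul_cancel₀ _ hC.ne'
      have ht := h (-ε)
      rw [zero_add, abs_of_neg (by linarith)] at ht
      simp only [abs_zero, mul_zero, sub_zero] at ht
      nlinarith [mul_pos hε0 hε0, mul_pos (mul_pos hε0 hε0) hC]
    have hw : (1 + μ * τ)⁻¹ * ((0:ℝ) + τ * g) = (τ * g) / (μ * τ + 1) := by
      rw [zero_add, inv_mul_eq_div, add_comm (μ * τ) 1]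
    rw [hw]
    unfold softThresh
    rw [if_neg, if_neg]
    · push_neg
      rw [← neg_div, div_le_div_iff_of_pos_right hd]
      nlinarith [mul_le_mul_of_nonneg_left hgge hτ.le]
    · push_neg
      rw [div_le_div_iff_of_pos_right hd]
      nlinarith [mul_le_mul_of_nonneg_left hgle hτ.le]
  · -- zi > 0 : g = μ zi + lam
    have hg : g = μ * zi + lam := by
      have h1 : g - μ * zi ≤ lam := by
        by_contra hc
        push_neg at hc
        set ε := (g - μ * zi - lam) / C with hεdef
        have hε0 : 0 < ε := div_pos (by linarith) hC
        have hεC : ε * C = g - μ * zi - lam := div_mul_cancel₀ _ hC.ne'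
        have ht := h ε
        rw [abs_of_pos (by linarith), abs_of_pos hzi] at ht
        nlinarith [mul_pos hε0 hε0, mul_pos (mul_pos hε0 hε0) hC]
      have h2 : lam ≤ g - μ * zi := by
        by_contra hc
        push_neg at hc
        have hε0 : 0 < min zi ((lam - (g - μ * zi)) / C) :=
          lt_min hzi (div_pos (by linarith) hC)
        set ε := min zi ((lam - (g - μ * zi)) / C) with hεdef
        have hε1 : ε ≤ zi := min_le_left _ _
        have hε2 : ε * C ≤ lam - (g - μ * zi) := (le_div_iff₀ hC).mp (min_le_right _ _)
        have ht := h (-ε)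
        rw [abs_of_nonneg (by linarith), abs_of_pos hzi] at ht
        nlinarith [mul_le_mul_of_nonneg_left hε2 hε0.le, mul_pos hε0 (show (0:ℝ) < lam - (g - μ * zi) by linarith)]
      linarith
    have hw : (1 + μ * τ)⁻¹ * (zi + τ * g) = zi + lam * τ / (μ * τ + 1) := by
      rw [hg]; field_simp; ring
    rw [hw]
    unfold softThresh
    rw [if_pos (by linarith)]
    ring

theorem enet_minimizer_fixed_point {n m : ℕ}
    (A : EuclideanSpace ℝ (Fin n) →L[ℝ] EuclideanSpace ℝ (Fin m))
    (y : EuclideanSpace ℝ (Fin m)) (lam μ τ : ℝ)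
    (hlam : 0 < lam) (hμ : 0 < μ) (hτ : 0 < τ) (hA : τ * ‖A‖^2 ≤ 1)
    (z : EuclideanSpace ℝ (Fin n)) (hz : ∀ x, enet A y lam μ z ≤ enet A y lam μ x) :
    istMap A y lam μ τ z = z := by
  set g := (ContinuousLinearMap.adjoint A) (y - A z) with hgdef
  ext i
  have happ : istMap A y lam μ τ z i
      = softThresh (lam * τ / (μ * τ + 1)) ((1 + μ * τ)⁻¹ * (z i + τ * g i)) := by
    unfold istMap softThreshVec
    simp [PiLp.smul_apply, PiLp.add_apply, smul_eq_mul, hgdef, mul_add]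
  rw [happ]
  have key : ∀ t : ℝ, t * (g i - μ * z i)
      ≤ lam * (|z i + t| - |z i|) + t ^ 2 * (‖A (EuclideanSpace.single i (1:ℝ))‖ ^ 2 + μ) / 2 := by
    intro t
    set s : EuclideanSpace ℝ (Fin n) := EuclideanSpace.single i t with hs
    have hsm : s = t • EuclideanSpace.single i (1:ℝ) := by
      ext j
      simp [hs, EuclideanSpace.single_apply, mul_ite]
    have hx := hz (z + s)
    unfold enet at hx
    have h1 : ‖y - A (z + s)‖ ^ 2
        = ‖y - A z‖ ^ 2 - 2 * (t * g i) + t ^ 2 * ‖A (EuclideanSpace.single i (1:ℝ))‖ ^ 2 := by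
      have hsplit : y - A (z + s) = (y - A z) - t • A (EuclideanSpace.single i (1:ℝ)) := by
        rw [hsm, map_add, map_smul]; abel
      have hinner : (inner ℝ (y - A z) (A (EuclideanSpace.single i (1:ℝ))) : ℝ) = g i := by
        rw [← ContinuousLinearMap.adjoint_inner_left, ← hgdef,
          EuclideanSpace.inner_single_right]
        simp
      rw [hsplit, @norm_sub_sq_real, real_inner_smul_right, hinner, norm_smul]
      simp [mul_pow, sq_abs]
      try ring
    have h2 : l1norm (z + s) = l1norm z + (|z i + t| - |z i|) := by
      unfold l1norm
      have hcongr : ∀ j ∈ Finset.univ, |(z + s) j| = |z j| + (if j = i then |z i + t| - |z i| else 0) := by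
        intro j _
        rcases eq_or_ne j i with rfl | hj
        · simp [hs, EuclideanSpace.single_apply]
          try ring
        · simp [hs, EuclideanSpace.single_apply, hj]
      rw [Finset.sum_congr rfl hcongr, Finset.sum_add_distrib,
        Finset.sum_ite_eq' Finset.univ i]
      simp
    have h3 : ‖z + s‖ ^ 2 = ‖z‖ ^ 2 + 2 * (t * z i) + t ^ 2 := by
      have hinner : (inner ℝ z s : ℝ) = t * z i := by
        rw [hs, EuclideanSpace.inner_single_right]
        simp
      rw [@norm_add_sq_real, hinner, hs, EuclideanSpace.norm_single]
      simp [sq_abs, Real.norm_eq_abs]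
    rw [h1, h2, h3] at hx
    nlinarith [hx]
  have hC : 0 < ‖A (EuclideanSpace.single i (1:ℝ))‖ ^ 2 + μ := by positivity
  exact scalar_key lam μ τ (z i) (g i) _ hlam hμ hτ hC key
end

section
/- (Lemma 3.) If x_t minimizes the surrogate f_{t−1}(·, x_{t−1}) (i.e., x_t = Γ_{t−1}(x_{t−1})), and z_{t−1} minimizes f_{t−1}, then f_{t−1}(x_t) − f_{t−1}(z_{t−1}) ≤ (1/τ)‖x_{t−1} − z_{t−1}‖₂². -/
theorem lemma3 {n m : ℕ}
    (A : EuclideanSpace ℝ (Fin n) →L[ℝ] EuclideanSpace ℝ (Fin m))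
    (y : EuclideanSpace ℝ (Fin m)) (lam μ τ : ℝ)
    (hlam : 0 < lam) (hμ : 0 < μ) (hτ : 0 < τ) (hA : τ * ‖A‖^2 ≤ 1)
    (b xt z : EuclideanSpace ℝ (Fin n))
    (hxt : ∀ w, enet A y lam μ xt + surr A τ xt b ≤ enet A y lam μ w + surr A τ w b)
    (hz : ∀ w, enet A y lam μ z ≤ enet A y lam μ w) :
    enet A y lam μ xt - enet A y lam μ z ≤ (1 / τ) * ‖b - z‖^2 := by
  have hsurr_nonneg : 0 ≤ surr A τ xt b := by
    have h1 : ‖A xt - A b‖ ≤ ‖A‖ * ‖xt - b‖ := by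
      calc ‖A xt - A b‖ = ‖A (xt - b)‖ := by rw [map_sub]
        _ ≤ ‖A‖ * ‖xt - b‖ := A.le_opNorm _
    have h2 : ‖A xt - A b‖^2 ≤ ‖A‖^2 * ‖xt - b‖^2 := by
      rw [← mul_pow]
      exact pow_le_pow_left₀ (norm_nonneg _) h1 2
    have h3 : ‖A‖^2 ≤ 1 / τ := by
      rw [le_div_iff₀ hτ]; linarith [hA]
    have h4 : ‖A xt - A b‖^2 ≤ (1/τ) * ‖xt - b‖^2 :=
      h2.trans (mul_le_mul_of_nonneg_right h3 (by positivity))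
    unfold surr
    have : (1 / (2 * τ)) * ‖xt - b‖^2 = (1/2) * ((1/τ) * ‖xt - b‖^2) := by
      field_simp
    rw [this]
    nlinarith [h4]
  have hsz : surr A τ z b ≤ (1 / (2*τ)) * ‖z - b‖^2 := by
    unfold surr
    nlinarith [sq_nonneg ‖A z - A b‖]
  have key := hxt z
  have : enet A y lam μ xt ≤ enet A y lam μ z + (1/(2*τ)) * ‖z - b‖^2 := by
    linarith
  have hnorm : ‖z - b‖ = ‖b - z‖ := norm_sub_rev _ _
  rw [hnorm] at this
  have h12 : (1/(2*τ)) * ‖b - z‖^2 ≤ (1/τ) * ‖b - z‖^2 := by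
    apply mul_le_mul_of_nonneg_right _ (by positivity)
    rw [div_le_div_iff₀ (by linarith) hτ]; linarith
  linarith
end

section
/- (Corollary 1, minimizer drift bound.) Under τ‖A_t‖₂² ≤ 1, ‖v_t‖₂ ≤ v_M, ‖z_t‖₂ ≤ z_M, the distance between consecutive Elastic-net minimizers satisfies ‖z_t − z_{t−1}‖₂ ≤ (z_M + v_M)·‖A_tᵀA_t − A_{t−1}ᵀA_{t−1}‖₂/μ + ‖v_t − v_{t−1}‖₂/(μτ), in the noiseless case y_t = A_t v_t. -/
open RealInnerProductSpace

lemma softThresh_lip (β s t : ℝ) (hβ : 0 ≤ β) :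
    |softThresh β s - softThresh β t| ≤ |s - t| := by
  unfold softThresh
  split_ifs <;> rw [abs_le] <;>
    constructor <;> linarith [le_abs_self (s - t), neg_abs_le (s - t), abs_nonneg (s - t)]

lemma softThresh_min (lam a b : ℝ) (hlam : 0 ≤ lam) (ha : 0 < a) (s : ℝ) :
    lam * |softThresh (lam / a) (b / a)| + (a / 2) * (softThresh (lam / a) (b / a)) ^ 2
      - b * (softThresh (lam / a) (b / a))
      + (a / 2) * (s - softThresh (lam / a) (b / a)) ^ 2
    ≤ lam * |s| + (a / 2) * s ^ 2 - b * s := by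
  unfold softThresh
  split_ifs with h1 h2
  · have hlb : lam < b := by
      rw [div_lt_div_iff_of_pos_right ha] at h1; exact h1
    have hat : a * (b / a - lam / a) = b - lam := by field_simp
    have ht0 : 0 ≤ b / a - lam / a := by nlinarith
    rw [abs_of_nonneg ht0]
    nlinarith [mul_le_mul_of_nonneg_left (le_abs_self s) hlam]
  · have hlb : b < -lam := by
      have hfa : lam / a * a = lam := div_mul_cancel₀ _ ha.ne'
      rw [div_lt_iff₀ ha] at h2; nlinarith [h2, hfa]
    have hat : a * (b / a + lam / a) = b + lam := by field_simp
    have ht0 : b / a + lam / a ≤ 0 := by nlinarith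
    rw [abs_of_nonpos ht0]
    nlinarith [mul_le_mul_of_nonneg_left (neg_abs_le s) hlam]
  · have hb1 : b ≤ lam := by
      rw [not_lt, div_le_div_iff_of_pos_right ha] at h1; exact h1
    have hb2 : -lam ≤ b := by
      have hfa : lam / a * a = lam := div_mul_cancel₀ _ ha.ne'
      rw [not_lt, le_div_iff₀ ha] at h2; nlinarith [h2, hfa]
    simp only [abs_zero, mul_zero, sub_zero, zero_pow, ne_eq]
    rcases abs_cases s with ⟨h, h0⟩ | ⟨h, h0⟩ <;> rw [h] <;> nlinarith [sq_nonneg s]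

lemma softThreshVec_lip {n : ℕ} (β : ℝ) (hβ : 0 ≤ β) (x y : EuclideanSpace ℝ (Fin n)) :
    ‖softThreshVec β x - softThreshVec β y‖ ≤ ‖x - y‖ := by
  rw [EuclideanSpace.norm_eq, EuclideanSpace.norm_eq]
  apply Real.sqrt_le_sqrt
  apply Finset.sum_le_sum
  intro i _
  have h := softThresh_lip β (x i) (y i) hβ
  simp only [PiLp.sub_apply, Real.norm_eq_abs, softThreshVec]
  exact pow_le_pow_left₀ (abs_nonneg _) h 2

lemma contract_aux {n m : ℕ}
    (A : EuclideanSpace ℝ (Fin n) →L[ℝ] EuclideanSpace ℝ (Fin m))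
    (τ : ℝ) (hτ : 0 < τ) (hA : τ * ‖A‖ ^ 2 ≤ 1) (u : EuclideanSpace ℝ (Fin n)) :
    ‖u - τ • (ContinuousLinearMap.adjoint A) (A u)‖ ≤ ‖u‖ := by
  have hsq : ‖u - τ • (ContinuousLinearMap.adjoint A) (A u)‖ ^ 2 ≤ ‖u‖ ^ 2 := by
    rw [norm_sub_sq_real]
    have h1 : (inner ℝ u (τ • (ContinuousLinearMap.adjoint A) (A u)) : ℝ) = τ * ‖A u‖ ^ 2 := by
      rw [real_inner_smul_right, real_inner_comm, ContinuousLinearMap.adjoint_inner_left,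
        real_inner_self_eq_norm_sq]
    have h2 : ‖(ContinuousLinearMap.adjoint A) (A u)‖ ≤ ‖A‖ * ‖A u‖ := by
      calc ‖(ContinuousLinearMap.adjoint A) (A u)‖ ≤ ‖ContinuousLinearMap.adjoint A‖ * ‖A u‖ :=
            ContinuousLinearMap.le_opNorm _ _
        _ = ‖A‖ * ‖A u‖ := by rw [show ‖ContinuousLinearMap.adjoint A‖ = ‖A‖ from LinearIsometryEquiv.norm_map _ A]
    have h3 : ‖τ • (ContinuousLinearMap.adjoint A) (A u)‖ ^ 2 ≤ τ ^ 2 * (‖A‖ * ‖A u‖) ^ 2 := by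
      rw [norm_smul, Real.norm_eq_abs, abs_of_pos hτ, mul_pow]
      gcongr
    have hAu : ‖A u‖ ≤ ‖A‖ * ‖u‖ := A.le_opNorm u
    nlinarith [norm_nonneg (A u), sq_nonneg ‖A u‖, norm_nonneg u, h1, h3,
      mul_nonneg hτ.le (sq_nonneg ‖A u‖)]
  nlinarith [norm_nonneg (u - τ • (ContinuousLinearMap.adjoint A) (A u)), norm_nonneg u]

set_option maxHeartbeats 1000000 in
lemma min_fixed {n m : ℕ}
    (A : EuclideanSpace ℝ (Fin n) →L[ℝ] EuclideanSpace ℝ (Fin m))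
    (v z : EuclideanSpace ℝ (Fin n)) (lam μ τ : ℝ)
    (hlam : 0 < lam) (hμ : 0 < μ) (hτ : 0 < τ) (hA : τ * ‖A‖ ^ 2 ≤ 1)
    (hz : ∀ x, enet A (A v) lam μ z ≤ enet A (A v) lam μ x) :
    z = istMap A (A v) lam μ τ z := by
  set a : ℝ := (1 + μ * τ) / τ with ha_def
  have ha : 0 < a := by positivity
  set w : EuclideanSpace ℝ (Fin n) :=
    z + τ • (ContinuousLinearMap.adjoint A) (A v - A z) with hw_def
  set q : ℝ → ℝ → ℝ := fun b s => lam * |s| + (a / 2) * s ^ 2 - (b / τ) * s with hq_def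
  -- the sum identity
  have hsum : ∀ x : EuclideanSpace ℝ (Fin n),
      (∑ i, q (w i) (x i)) - (∑ i, q (w i) (z i)) =
        (enet A (A v) lam μ x - enet A (A v) lam μ z)
          + (1 / (2 * τ)) * ‖x - z‖ ^ 2 - (1 / 2) * ‖A x - A z‖ ^ 2 := by
    intro x
    have hxsum : ∀ u : EuclideanSpace ℝ (Fin n),
        (∑ i, q (w i) (u i)) = lam * l1norm u + (a / 2) * ‖u‖ ^ 2
          - (1 / τ) * (inner ℝ w u : ℝ) := by
      intro u
      simp only [hq_def, l1norm]
      rw [show ‖u‖ ^ 2 = ∑ i, ‖u i‖ ^ 2 from PiLp.norm_sq_eq_of_L2 _ u,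
        PiLp.inner_apply]
      simp only [RCLike.inner_apply, conj_trivial, Real.norm_eq_abs, sq_abs]
      rw [Finset.mul_sum, Finset.mul_sum, Finset.mul_sum, ← Finset.sum_add_distrib,
        ← Finset.sum_sub_distrib]
      exact Finset.sum_congr rfl fun i _ => by ring
    rw [hxsum x, hxsum z]
    simp only [enet]
    have e1 : A v - A x = (A v - A z) - (A x - A z) := by abel
    rw [e1, norm_sub_sq_real (A v - A z) (A x - A z), norm_sub_sq_real x z]
    have h3 : (inner ℝ w x : ℝ) =
        inner ℝ z x + τ * inner ℝ ((ContinuousLinearMap.adjoint A) (A v - A z)) x := by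
      rw [hw_def, inner_add_left, real_inner_smul_left]
    have h4 : (inner ℝ w z : ℝ) =
        inner ℝ z z + τ * inner ℝ ((ContinuousLinearMap.adjoint A) (A v - A z)) z := by
      rw [hw_def, inner_add_left, real_inner_smul_left]
    have h5 : (inner ℝ (A v - A z) (A x - A z) : ℝ) =
        inner ℝ ((ContinuousLinearMap.adjoint A) (A v - A z)) x
          - inner ℝ ((ContinuousLinearMap.adjoint A) (A v - A z)) z := by
      rw [ContinuousLinearMap.adjoint_inner_left, ContinuousLinearMap.adjoint_inner_left,
        ← inner_sub_right]
    rw [h3, h4, h5, real_inner_self_eq_norm_sq z, real_inner_comm x z, ha_def]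
    field_simp
    ring
  -- every point gives nonnegative surrogate gap
  have key : ∀ x : EuclideanSpace ℝ (Fin n),
      0 ≤ (∑ i, q (w i) (x i)) - (∑ i, q (w i) (z i)) := by
    intro x
    rw [hsum x]
    have hAxz : τ * ‖A x - A z‖ ^ 2 ≤ ‖x - z‖ ^ 2 := by
      rw [← map_sub]
      have h := A.le_opNorm (x - z)
      have h2 : ‖A (x - z)‖ ^ 2 ≤ ‖A‖ ^ 2 * ‖x - z‖ ^ 2 := by
        nlinarith [norm_nonneg (A (x - z)), norm_nonneg (x - z), norm_nonneg A]
      have h5 := mul_le_mul_of_nonneg_left h2 hτ.le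
      have h6 := mul_le_mul_of_nonneg_right hA (sq_nonneg ‖x - z‖)
      nlinarith [h5, h6]
    have hfz := hz x
    have h4 : (1 / 2) * ‖A x - A z‖ ^ 2 ≤ (1 / (2 * τ)) * ‖x - z‖ ^ 2 := by
      rw [div_mul_eq_mul_div, div_mul_eq_mul_div, div_le_div_iff₀ (by norm_num) (by positivity)]
      linarith [hAxz]
    linarith
  -- each coordinate of z minimizes q (w i)
  have hcoord : ∀ (i : Fin n) (s : ℝ), q (w i) (z i) ≤ q (w i) s := by
    intro i s
    have hk := key (WithLp.toLp 2 (Function.update z i s))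
    simp only [WithLp.ofLp_toLp] at hk
    have h1 : (∑ j, q (w j) ((Function.update z i s : Fin n → ℝ) j)) =
        q (w i) s + ∑ j ∈ Finset.univ.erase i, q (w j) (z j) := by
      rw [← Finset.add_sum_erase _ (fun j => q (w j) ((Function.update z i s : Fin n → ℝ) j))
        (Finset.mem_univ i)]
      congr 1
      · rw [Function.update_self]
      · exact Finset.sum_congr rfl fun j hj => by
          rw [Function.update_of_ne (Finset.ne_of_mem_erase hj)]
    have h2 : (∑ j, q (w j) (z j)) =
        q (w i) (z i) + ∑ j ∈ Finset.univ.erase i, q (w j) (z j) :=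
      (Finset.add_sum_erase _ _ (Finset.mem_univ i)).symm
    rw [h1, h2] at hk
    linarith
  -- conclude coordinatewise
  ext i
  obtain ⟨t, ht_def⟩ : ∃ t : ℝ, t = softThresh (lam / a) ((w i / τ) / a) := ⟨_, rfl⟩
  have hmin := softThresh_min lam a (w i / τ) hlam.le ha (z i)
  rw [← ht_def] at hmin
  have hup := hcoord i t
  simp only [hq_def] at hup
  have hzt : z i = t := by
    have hsq : (z i - t) ^ 2 ≤ 0 := by nlinarith [hmin, hup, ha]
    have h0 : (z i - t) ^ 2 = 0 := le_antisymm hsq (sq_nonneg _)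
    have h1 : z i - t = 0 := by
      exact (pow_eq_zero_iff two_ne_zero).mp h0
    linarith
  have e1 : lam / a = lam * τ / (μ * τ + 1) := by
    rw [ha_def]; field_simp; try ring
  have e2 : (w i / τ) / a = (1 + μ * τ)⁻¹ * w i := by
    rw [ha_def]; field_simp; try ring
  have hist : istMap A (A v) lam μ τ z i
      = softThresh (lam * τ / (μ * τ + 1)) ((1 + μ * τ)⁻¹ * w i) := by
    simp only [istMap, softThreshVec, PiLp.toLp_apply, PiLp.smul_apply, smul_eq_mul, ← hw_def]
  rw [hist, ← e1, ← e2, ← ht_def, hzt]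


set_option maxHeartbeats 1000000 in
theorem minimizer_drift_bound {n m : ℕ}
    (A A' : EuclideanSpace ℝ (Fin n) →L[ℝ] EuclideanSpace ℝ (Fin m))
    (v v' : EuclideanSpace ℝ (Fin n)) (lam μ τ v_M z_M : ℝ)
    (hlam : 0 < lam) (hμ : 0 < μ) (hτ : 0 < τ)
    (hA : τ * ‖A‖^2 ≤ 1) (hA' : τ * ‖A'‖^2 ≤ 1)
    (hv : ‖v‖ ≤ v_M) (hv' : ‖v'‖ ≤ v_M)
    (z z' : EuclideanSpace ℝ (Fin n))
    (hz : ∀ x, enet A (A v) lam μ z ≤ enet A (A v) lam μ x)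
    (hz' : ∀ x, enet A' (A' v') lam μ z' ≤ enet A' (A' v') lam μ x)
    (hzM : ‖z‖ ≤ z_M) (hzM' : ‖z'‖ ≤ z_M) :
    ‖z - z'‖ ≤
      (z_M + v_M) *
        ‖(ContinuousLinearMap.adjoint A).comp A - (ContinuousLinearMap.adjoint A').comp A'‖ / μ +
      ‖v - v'‖ / (μ * τ) := by
  have hfix := min_fixed A v z lam μ τ hlam hμ hτ hA hz
  have hfix' := min_fixed A' v' z' lam μ τ hlam hμ hτ hA' hz'
  set G : EuclideanSpace ℝ (Fin n) →L[ℝ] EuclideanSpace ℝ (Fin n) :=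
    (ContinuousLinearMap.adjoint A).comp A with hG
  set G' : EuclideanSpace ℝ (Fin n) →L[ℝ] EuclideanSpace ℝ (Fin n) :=
    (ContinuousLinearMap.adjoint A').comp A' with hG'
  set β : ℝ := lam * τ / (μ * τ + 1) with hβ_def
  have hβ : 0 ≤ β := by positivity
  set c : ℝ := (1 + μ * τ)⁻¹ with hc_def
  have hc : 0 < c := by positivity
  set u : EuclideanSpace ℝ (Fin n) :=
    c • (z + τ • (ContinuousLinearMap.adjoint A) (A v - A z)) with hu
  set u' : EuclideanSpace ℝ (Fin n) :=
    c • (z' + τ • (ContinuousLinearMap.adjoint A') (A' v' - A' z')) with hu'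
  have hlip : ‖z - z'‖ ≤ ‖u - u'‖ := by
    calc ‖z - z'‖ = ‖softThreshVec β u - softThreshVec β u'‖ := by
          nth_rewrite 1 [hfix, hfix']; rfl
      _ ≤ ‖u - u'‖ := softThreshVec_lip β hβ u u'
  -- decomposition of u - u'
  have hdec : u - u' = c • (((z - z') - τ • (ContinuousLinearMap.adjoint A) (A (z - z')))
      + τ • ((G - G') v) + τ • (G' (v - v')) - τ • ((G - G') z')) := by
    rw [hu, hu', hG, hG']
    simp only [map_sub, ContinuousLinearMap.coe_sub', Pi.sub_apply,
      ContinuousLinearMap.coe_comp', Function.comp_apply]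
    module
  set dG : ℝ := ‖G - G'‖ with hdG
  have hdG0 : 0 ≤ dG := norm_nonneg _
  have hbound : ‖u - u'‖ ≤ c * (‖z - z'‖ + τ * (dG * v_M) + ‖v - v'‖ + τ * (dG * z_M)) := by
    rw [hdec, norm_smul, Real.norm_eq_abs, abs_of_pos hc]
    have t1 : ‖(z - z') - τ • (ContinuousLinearMap.adjoint A) (A (z - z'))‖ ≤ ‖z - z'‖ :=
      contract_aux A τ hτ hA (z - z')
    have t2 : ‖τ • ((G - G') v)‖ ≤ τ * (dG * v_M) := by
      rw [norm_smul, Real.norm_eq_abs, abs_of_pos hτ]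
      have := (G - G').le_opNorm v
      have h2 : ‖(G - G') v‖ ≤ dG * v_M := by
        calc ‖(G - G') v‖ ≤ dG * ‖v‖ := this
          _ ≤ dG * v_M := by
              apply mul_le_mul_of_nonneg_left hv hdG0
      exact mul_le_mul_of_nonneg_left h2 hτ.le
    have t3 : ‖τ • (G' (v - v'))‖ ≤ ‖v - v'‖ := by
      rw [norm_smul, Real.norm_eq_abs, abs_of_pos hτ]
      have hG'norm : ‖G'‖ ≤ ‖A'‖ ^ 2 := by
        calc ‖G'‖ ≤ ‖ContinuousLinearMap.adjoint A'‖ * ‖A'‖ := ContinuousLinearMap.opNorm_comp_le _ _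
          _ = ‖A'‖ * ‖A'‖ := by rw [show ‖ContinuousLinearMap.adjoint A'‖ = ‖A'‖ from
              LinearIsometryEquiv.norm_map _ A']
          _ = ‖A'‖ ^ 2 := (sq ‖A'‖).symm
      have h2 : ‖G' (v - v')‖ ≤ ‖A'‖ ^ 2 * ‖v - v'‖ := by
        calc ‖G' (v - v')‖ ≤ ‖G'‖ * ‖v - v'‖ := G'.le_opNorm _
          _ ≤ ‖A'‖ ^ 2 * ‖v - v'‖ := mul_le_mul_of_nonneg_right hG'norm (norm_nonneg _)
      have h3 : τ * (‖A'‖ ^ 2 * ‖v - v'‖) ≤ 1 * ‖v - v'‖ := by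
        rw [← mul_assoc]
        exact mul_le_mul_of_nonneg_right hA' (norm_nonneg _)
      calc τ * ‖G' (v - v')‖ ≤ τ * (‖A'‖ ^ 2 * ‖v - v'‖) := mul_le_mul_of_nonneg_left h2 hτ.le
        _ ≤ 1 * ‖v - v'‖ := h3
        _ = ‖v - v'‖ := one_mul _
    have t4 : ‖τ • ((G - G') z')‖ ≤ τ * (dG * z_M) := by
      rw [norm_smul, Real.norm_eq_abs, abs_of_pos hτ]
      have h2 : ‖(G - G') z'‖ ≤ dG * z_M := by
        calc ‖(G - G') z'‖ ≤ dG * ‖z'‖ := (G - G').le_opNorm z'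
          _ ≤ dG * z_M := mul_le_mul_of_nonneg_left hzM' hdG0
      exact mul_le_mul_of_nonneg_left h2 hτ.le
    have htr : ‖(((z - z') - τ • (ContinuousLinearMap.adjoint A) (A (z - z')))
        + τ • ((G - G') v) + τ • (G' (v - v')) - τ • ((G - G') z'))‖
        ≤ ‖z - z'‖ + τ * (dG * v_M) + ‖v - v'‖ + τ * (dG * z_M) := by
      calc ‖(((z - z') - τ • (ContinuousLinearMap.adjoint A) (A (z - z')))
            + τ • ((G - G') v) + τ • (G' (v - v')) - τ • ((G - G') z'))‖
          ≤ ‖((z - z') - τ • (ContinuousLinearMap.adjoint A) (A (z - z')))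
            + τ • ((G - G') v) + τ • (G' (v - v'))‖ + ‖τ • ((G - G') z')‖ := norm_sub_le _ _
        _ ≤ (‖((z - z') - τ • (ContinuousLinearMap.adjoint A) (A (z - z')))
            + τ • ((G - G') v)‖ + ‖τ • (G' (v - v'))‖) + ‖τ • ((G - G') z')‖ := by
            gcongr; exact norm_add_le _ _
        _ ≤ ((‖(z - z') - τ • (ContinuousLinearMap.adjoint A) (A (z - z'))‖
            + ‖τ • ((G - G') v)‖) + ‖τ • (G' (v - v'))‖) + ‖τ • ((G - G') z')‖ := by
            gcongr; exact norm_add_le _ _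
        _ ≤ ‖z - z'‖ + τ * (dG * v_M) + ‖v - v'‖ + τ * (dG * z_M) := by
            gcongr
    exact mul_le_mul_of_nonneg_left htr hc.le
  -- combine
  have hmain : ‖z - z'‖ ≤ c * (‖z - z'‖ + τ * (dG * v_M) + ‖v - v'‖ + τ * (dG * z_M)) :=
    hlip.trans hbound
  have hcmul : c * (1 + μ * τ) = 1 := inv_mul_cancel₀ (by positivity)
  have hstep : (1 + μ * τ) * ‖z - z'‖
      ≤ ‖z - z'‖ + τ * (dG * v_M) + ‖v - v'‖ + τ * (dG * z_M) := by
    have h := mul_le_mul_of_nonneg_left hmain (by positivity : (0:ℝ) ≤ 1 + μ * τ)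
    calc (1 + μ * τ) * ‖z - z'‖
        ≤ (1 + μ * τ) * (c * (‖z - z'‖ + τ * (dG * v_M) + ‖v - v'‖ + τ * (dG * z_M))) := h
      _ = (c * (1 + μ * τ)) * (‖z - z'‖ + τ * (dG * v_M) + ‖v - v'‖ + τ * (dG * z_M)) := by
          ring
      _ = ‖z - z'‖ + τ * (dG * v_M) + ‖v - v'‖ + τ * (dG * z_M) := by rw [hcmul]; ring
  have hfin : ‖z - z'‖ ≤ ((z_M + v_M) * dG * τ + ‖v - v'‖) / (μ * τ) := by
    rw [le_div_iff₀ (by positivity)]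
    nlinarith [hstep]
  have heq : (z_M + v_M) * dG / μ + ‖v - v'‖ / (μ * τ)
      = ((z_M + v_M) * dG * τ + ‖v - v'‖) / (μ * τ) := by
    field_simp
  rw [hG] at hdG
  rw [← hdG] at *
  rw [heq]
  exact hfin
end
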